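/- In the Verma module of 𝔤̃ with highest weight (h, μ, ρ₁, ρ₂), for any two subsets partitioning the level n = a + b and partitions A ⊢ a, B ⊢ b, the mixed inner product factorizes: ⟨(LJ)_{-A}(P¹P²)_{-B}|0⟩, (LJ)_{-B}(P¹P²)_{-A}|0⟩⟩ = ⟨(LJ)_{-A}|0⟩, (P¹P²)_{-A}|0⟩⟩ · ⟨(P¹P²)_{-B}|0⟩, (LJ)_{-B}|0⟩⟩. Verify this in the level-2 case A = (1), B = (1): ⟨ω(L_{-1}P^1_{-1})·J_{-1}P^2_{-1}|0⟩ factorizes as ⟨0|L_1 P^2_{-1}|0⟩·⟨0|P^1_1 J_{-1}|0⟩. -/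

import Mathlib

/-- `ε_{12} = -ε_{21} = 1`. -/
def eps : Fin 2 → Fin 2 → ℤ := fun i j =>
  if i = 0 ∧ j = 1 then 1 else if i = 1 ∧ j = 0 then -1 else 0

namespace Stmt19

inductive K where
  | kL : K
  | kJ : K
  | kP : Fin 2 → K
deriving DecidableEq

abbrev Ltr := ℤ × K

def isP : K → Bool
  | .kP _ => true
  | _ => false

/-- weight functions for counting -/
def wLJp (x : Ltr) : ℕ := if isP x.2 = false ∧ 0 < x.1 then 1 else 0
def wLJn (x : Ltr) : ℕ := if isP x.2 = false ∧ x.1 < 0 then 1 else 0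
def wPp (x : Ltr) : ℕ := if isP x.2 = true ∧ 0 < x.1 then 1 else 0
def wPn (x : Ltr) : ℕ := if isP x.2 = true ∧ x.1 < 0 then 1 else 0

def cLJp (w : List Ltr) : ℕ := (w.map wLJp).sum
def cLJn (w : List Ltr) : ℕ := (w.map wLJn).sum
def cPp (w : List Ltr) : ℕ := (w.map wPp).sum
def cPn (w : List Ltr) : ℕ := (w.map wPn).sum

def brL : Ltr → Ltr → List (ℂ × Ltr)
  | (m, .kL), (n, .kL) => [(((m - n : ℤ) : ℂ), (m + n, .kL))]
  | (m, .kL), (n, .kJ) => [((((-n) : ℤ) : ℂ), (m + n, .kJ))]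
  | (m, .kJ), (n, .kL) => [(((m : ℤ) : ℂ), (m + n, .kJ))]
  | (_, .kJ), (_, .kJ) => []
  | (m, .kL), (n, .kP i) => [(((m - n : ℤ) : ℂ), (m + n, .kP i))]
  | (m, .kP i), (n, .kL) => [(((m - n : ℤ) : ℂ), (m + n, .kP i))]
  | (m, .kJ), (n, .kP i) => [(((eps i 0 : ℤ) : ℂ), (m + n, .kP 0)), (((eps i 1 : ℤ) : ℂ), (m + n, .kP 1))]
  | (m, .kP i), (n, .kJ) => [((-((eps i 0 : ℤ) : ℂ)), (m + n, .kP 0)), ((-((eps i 1 : ℤ) : ℂ)), (m + n, .kP 1))]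
  | (_, .kP _), (_, .kP _) => []

structure Ctx (A : Type*) [Ring A] [Algebra ℂ A] where
  h : ℂ
  μ : ℂ
  α : ℂ
  β : ℂ
  ρ : Fin 2 → ℂ
  L : ℤ → A
  J : ℤ → A
  P : Fin 2 → ℤ → A
  hLL : ∀ m n : ℤ, ⁅L m, L n⁆ = ((m - n : ℤ) : ℂ) • L (m + n)
      + (if m + n = 0 then (α / 12 * ((m * (m ^ 2 - 1) : ℤ) : ℂ)) • (1 : A) else 0)
  hJJ : ∀ m n : ℤ, ⁅J m, J n⁆ = if m + n = 0 then (β * (m : ℂ)) • (1 : A) else 0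
  hLJ : ∀ m n : ℤ, ⁅L m, J n⁆ = ((-n : ℤ) : ℂ) • J (m + n)
  hLP : ∀ (m n : ℤ) (i : Fin 2), ⁅L m, P i n⁆ = ((m - n : ℤ) : ℂ) • P i (m + n)
  hJP : ∀ (m n : ℤ) (i : Fin 2),
      ⁅J m, P i n⁆ = ∑ j : Fin 2, (eps i j : ℂ) • P j (m + n)
  hPP : ∀ (m n : ℤ) (i j : Fin 2), ⁅P i m, P j n⁆ = 0
  v : A →ₗ[ℂ] ℂ
  hv1 : v 1 = 1
  hR : ∀ (x : A) (n : ℤ), 0 < n →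
      v (x * L n) = 0 ∧ v (x * J n) = 0 ∧ ∀ i, v (x * P i n) = 0
  hLft : ∀ (x : A) (n : ℤ), 0 < n →
      v (L (-n) * x) = 0 ∧ v (J (-n) * x) = 0 ∧ ∀ i, v (P i (-n) * x) = 0
  hz : ∀ x : A,
      v (x * L 0) = h * v x ∧ v (L 0 * x) = h * v x ∧
      v (x * J 0) = μ * v x ∧ v (J 0 * x) = μ * v x ∧
      ∀ i, v (x * P i 0) = ρ i * v x ∧ v (P i 0 * x) = ρ i * v x

variable {A : Type*} [Ring A] [Algebra ℂ A] (c : Ctx A)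

def Ctx.gen : Ltr → A
  | (m, .kL) => c.L m
  | (m, .kJ) => c.J m
  | (m, .kP i) => c.P i m

noncomputable def Ctx.brS : Ltr → Ltr → ℂ
  | (m, .kL), (n, .kL) => if m + n = 0 then c.α / 12 * ((m * (m ^ 2 - 1) : ℤ) : ℂ) else 0
  | (m, .kJ), (n, .kJ) => if m + n = 0 then c.β * (m : ℂ) else 0
  | _, _ => 0

def Ctx.W (w : List Ltr) : A := (w.map c.gen).prod

lemma Ctx.W_nil : c.W [] = 1 := rfl

lemma Ctx.W_cons (a : Ltr) (w : List Ltr) : c.W (a :: w) = c.gen a * c.W w := by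
  simp [Ctx.W]

lemma Ctx.W_append (u w : List Ltr) : c.W (u ++ w) = c.W u * c.W w := by
  simp [Ctx.W, List.prod_append]

lemma Ctx.master (a b : Ltr) :
    c.gen a * c.gen b = c.gen b * c.gen a
      + ((brL a b).map fun t => t.1 • c.gen t.2).sum + c.brS a b • (1 : A) := by
  obtain ⟨m, k⟩ := a
  obtain ⟨n, k'⟩ := b
  have key : ∀ x y S : A, y * x - x * y = S → x * y = y * x - S := by
    intro x y S hS
    rw [← hS]; exact (sub_sub_cancel _ _).symm
  cases k <;> cases k'
  case kL.kL =>
    have h0 := c.hLL m n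
    rw [Ring.lie_def, sub_eq_iff_eq_add] at h0
    simp only [Ctx.gen, brL, Ctx.brS, List.map_cons, List.map_nil, List.sum_cons,
      List.sum_nil, add_zero, ite_smul, zero_smul]
    rw [h0]; abel
  case kL.kJ =>
    have h0 := c.hLJ m n
    rw [Ring.lie_def, sub_eq_iff_eq_add] at h0
    simp only [Ctx.gen, brL, Ctx.brS, List.map_cons, List.map_nil, List.sum_cons,
      List.sum_nil, add_zero, zero_smul]
    rw [h0]; abel
  case kJ.kL =>
    have h0 := c.hLJ n m
    rw [Ring.lie_def, show n + m = m + n from Int.add_comm n m] at h0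
    have h1 := key _ _ _ h0
    simp only [Ctx.gen, brL, Ctx.brS, List.map_cons, List.map_nil, List.sum_cons,
      List.sum_nil, add_zero, zero_smul]
    rw [h1]
    have hco : -((-m : ℤ) : ℂ) = ((m : ℤ) : ℂ) := by push_cast; ring
    rw [sub_eq_add_neg, ← neg_smul, hco]
    try abel
  case kJ.kJ =>
    have h0 := c.hJJ m n
    rw [Ring.lie_def, sub_eq_iff_eq_add] at h0
    simp only [Ctx.gen, brL, Ctx.brS, List.map_nil, List.sum_nil, add_zero, ite_smul,
      zero_smul]
    rw [h0]; abel
  case kL.kP i =>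
    have h0 := c.hLP m n i
    rw [Ring.lie_def, sub_eq_iff_eq_add] at h0
    simp only [Ctx.gen, brL, Ctx.brS, List.map_cons, List.map_nil, List.sum_cons,
      List.sum_nil, add_zero, zero_smul]
    rw [h0]; abel
  case kP.kL i =>
    have h0 := c.hLP n m i
    rw [Ring.lie_def, show n + m = m + n from Int.add_comm n m] at h0
    have h1 := key _ _ _ h0
    simp only [Ctx.gen, brL, Ctx.brS, List.map_cons, List.map_nil, List.sum_cons,
      List.sum_nil, add_zero, zero_smul]
    rw [h1]
    have hco : -((n - m : ℤ) : ℂ) = ((m - n : ℤ) : ℂ) := by push_cast; ring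
    rw [sub_eq_add_neg, ← neg_smul, hco]
    try abel
  case kJ.kP i =>
    have h0 := c.hJP m n i
    rw [Ring.lie_def, sub_eq_iff_eq_add, Fin.sum_univ_two] at h0
    simp only [Ctx.gen, brL, Ctx.brS, List.map_cons, List.map_nil, List.sum_cons,
      List.sum_nil, add_zero, zero_smul]
    rw [h0]; abel
  case kP.kJ i =>
    have h0 := c.hJP n m i
    rw [Ring.lie_def, Fin.sum_univ_two,
      show n + m = m + n from Int.add_comm n m] at h0
    have h1 := key _ _ _ h0
    simp only [Ctx.gen, brL, Ctx.brS, List.map_cons, List.map_nil, List.sum_cons,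
      List.sum_nil, add_zero, zero_smul]
    rw [h1, sub_eq_add_neg, neg_add, ← neg_smul, ← neg_smul]
    try abel
  case kP.kP i j =>
    have h0 := c.hPP m n i j
    rw [Ring.lie_def, sub_eq_zero] at h0
    simp only [Ctx.gen, brL, Ctx.brS, List.map_nil, List.sum_nil, add_zero, zero_smul]
    rw [h0]
    try abel

/-- shape of the bracket list -/
lemma brL_shape (a b : Ltr) (t : ℂ × Ltr) (ht : t ∈ brL a b) :
    t.2.1 = a.1 + b.1 ∧ isP t.2.2 = (isP a.2 || isP b.2)
      ∧ ¬(isP a.2 = true ∧ isP b.2 = true) := by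
  obtain ⟨m, k⟩ := a
  obtain ⟨n, k'⟩ := b
  cases k <;> cases k' <;> simp_all [brL, isP] <;> rcases ht with h | h <;> simp [h, isP]

lemma brS_cases (a b : Ltr) :
    c.brS a b = 0 ∨ (isP a.2 = false ∧ isP b.2 = false) := by
  obtain ⟨m, k⟩ := a
  obtain ⟨n, k'⟩ := b
  cases k <;> cases k' <;> simp [Ctx.brS, isP]

lemma brL_PP (m n : ℤ) (i j : Fin 2) : brL (m, K.kP i) (n, K.kP j) = [] := rfl

/-- v applied to a sum of scaled generators sandwiched between X and Y. -/
lemma Ctx.vsum (ts : List (ℂ × Ltr)) (X Y : A) :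
    c.v (X * (((ts.map fun t => t.1 • c.gen t.2).sum) * Y))
      = (ts.map fun t => t.1 * c.v (X * (c.gen t.2 * Y))).sum := by
  induction ts with
  | nil => simp
  | cons t ts ih =>
      simp only [List.map_cons, List.sum_cons, add_mul, mul_add, map_add, smul_mul_assoc,
        mul_smul_comm, map_smul, smul_eq_mul, ih]

/-- the fundamental swap identity -/
lemma Ctx.vswap (u w : List Ltr) (a b : Ltr) :
    c.v (c.W (u ++ a :: b :: w)) = c.v (c.W (u ++ b :: a :: w))
      + ((brL a b).map fun t => t.1 * c.v (c.W (u ++ t.2 :: w))).sum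
      + c.brS a b * c.v (c.W (u ++ w)) := by
  have e1 : c.W (u ++ a :: b :: w) = c.W u * (c.gen a * c.gen b * c.W w) := by
    simp [Ctx.W_append, Ctx.W_cons, mul_assoc]
  have e2 : c.W (u ++ b :: a :: w) = c.W u * (c.gen b * c.gen a * c.W w) := by
    simp [Ctx.W_append, Ctx.W_cons, mul_assoc]
  have e4 : ∀ t : ℂ × Ltr, c.W (u ++ t.2 :: w) = c.W u * (c.gen t.2 * c.W w) := by
    intro t; simp [Ctx.W_append, Ctx.W_cons, mul_assoc]
  have e3 : c.W (u ++ w) = c.W u * c.W w := c.W_append u w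
  rw [e1, e2, e3, c.master a b]
  simp only [add_mul, mul_add, map_add, smul_mul_assoc, one_mul, mul_smul_comm,
    map_smul, smul_eq_mul, mul_assoc]
  rw [c.vsum]
  simp only [e4, mul_assoc]

/-- right annihilation -/
lemma Ctx.vR (x : A) (a : Ltr) (ha : 0 < a.1) : c.v (x * c.gen a) = 0 := by
  obtain ⟨m, k⟩ := a
  cases k
  · exact (c.hR x m ha).1
  · exact (c.hR x m ha).2.1
  · exact (c.hR x m ha).2.2 _

/-- left annihilation -/
lemma Ctx.vL (x : A) (a : Ltr) (ha : a.1 < 0) : c.v (c.gen a * x) = 0 := by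
  obtain ⟨m, k⟩ := a
  have hm : 0 < -m := by omega
  have hmm : m = -(-m) := by ring
  cases k
  · have := (c.hLft x (-m) hm).1
    simpa [Ctx.gen, ← hmm] using this
  · have := (c.hLft x (-m) hm).2.1
    simpa [Ctx.gen, ← hmm] using this
  · next i =>
    have := (c.hLft x (-m) hm).2.2 i
    simpa [Ctx.gen, ← hmm] using this

/-- zero-mode value -/
noncomputable def zval (k : K) : ℂ :=
  match k with
  | .kL => c.h
  | .kJ => c.μ
  | .kP i => c.ρ i

lemma Ctx.vz_left (x : A) (k : K) : c.v (c.gen (0, k) * x) = zval c k * c.v x := by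
  cases k
  · exact (c.hz x).2.1
  · exact (c.hz x).2.2.2.1
  · next i => exact ((c.hz x).2.2.2.2 i).2

lemma Ctx.vz_right (x : A) (k : K) : c.v (x * c.gen (0, k)) = zval c k * c.v x := by
  cases k
  · exact (c.hz x).1
  · exact (c.hz x).2.2.1
  · next i => exact ((c.hz x).2.2.2.2 i).1

lemma cnt_swap (f : Ltr → ℕ) (w₁ w₂ : List Ltr) (a b : Ltr) :
    ((w₁ ++ b :: a :: w₂).map f).sum = ((w₁ ++ a :: b :: w₂).map f).sum := by
  simp [List.map_append, List.sum_append]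
  omega

lemma cnt1_key (a b l : Ltr) (ha : 0 < a.1) (hb : b.1 ≤ 0)
    (hPl : isP l.2 = (isP a.2 || isP b.2)) (hnot : ¬(isP a.2 = true ∧ isP b.2 = true)) :
    wLJp l + wPn b ≤ wLJp a + wLJp b + wPn l := by
  cases hA : isP a.2 <;> cases hB : isP b.2 <;> rw [hA, hB] at hPl
  · simp only [Bool.or_self] at hPl
    simp [wLJp, wPn, hA, hB, hPl, ha] <;> split_ifs <;> omega
  · simp only [Bool.or_true] at hPl
    simp [wLJp, wPn, hA, hB, hPl, ha] <;> split_ifs <;> omega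
  · simp only [Bool.true_or] at hPl
    simp [wLJp, wPn, hA, hB, hPl, ha] <;> split_ifs <;> omega
  · exact absurd ⟨hA, hB⟩ hnot

lemma cnt2_key (a b l : Ltr) (ha : 0 ≤ a.1) (hb : b.1 < 0)
    (hPl : isP l.2 = (isP a.2 || isP b.2)) (hnot : ¬(isP a.2 = true ∧ isP b.2 = true)) :
    wLJn l + wPp a + wPp b ≤ wLJn a + wLJn b + wPp l := by
  cases hA : isP a.2 <;> cases hB : isP b.2 <;> rw [hA, hB] at hPl
  · simp only [Bool.or_self] at hPl
    simp [wLJn, wPp, hA, hB, hPl, hb] <;> split_ifs <;> omega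
  · simp only [Bool.or_true] at hPl
    simp [wLJn, wPp, hA, hB, hPl, hb] <;> split_ifs <;> omega
  · simp only [Bool.true_or] at hPl
    simp [wLJn, wPp, hA, hB, hPl, hb] <;> split_ifs <;> omega
  · exact absurd ⟨hA, hB⟩ hnot

lemma cnt1_step (w₁ w₂ : List Ltr) (a b l : Ltr) (ha : 0 < a.1) (hb : b.1 ≤ 0)
    (hPl : isP l.2 = (isP a.2 || isP b.2)) (hnot : ¬(isP a.2 = true ∧ isP b.2 = true))
    (hc : cLJp (w₁ ++ a :: b :: w₂) < cPn (w₁ ++ a :: b :: w₂)) :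
    cLJp (w₁ ++ l :: w₂) < cPn (w₁ ++ l :: w₂) := by
  have key := cnt1_key a b l ha hb hPl hnot
  have hwa : wPn a = 0 := by simp [wPn]; intro _; omega
  simp only [cLJp, cPn, List.map_append, List.sum_append, List.map_cons,
    List.sum_cons] at hc ⊢
  omega

lemma cnt2_step (w₁ w₂ : List Ltr) (a b l : Ltr) (ha : 0 ≤ a.1) (hb : b.1 < 0)
    (hPl : isP l.2 = (isP a.2 || isP b.2)) (hnot : ¬(isP a.2 = true ∧ isP b.2 = true))
    (hc : cLJn (w₁ ++ a :: b :: w₂) < cPp (w₁ ++ a :: b :: w₂)) :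
    cLJn (w₁ ++ l :: w₂) < cPp (w₁ ++ l :: w₂) := by
  have key := cnt2_key a b l ha hb hPl hnot
  have hwb : wLJn a + wLJn b + wPp l = wLJn a + wLJn b + wPp l := rfl
  simp only [cLJn, cPp, List.map_append, List.sum_append, List.map_cons,
    List.sum_cons] at hc ⊢
  omega

lemma cnt1_scalar (w₁ w₂ : List Ltr) (a b : Ltr) (hA : isP a.2 = false) (hB : isP b.2 = false)
    (hc : cLJp (w₁ ++ a :: b :: w₂) < cPn (w₁ ++ a :: b :: w₂)) :
    cLJp (w₁ ++ w₂) < cPn (w₁ ++ w₂) := by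
  have h1 : wPn a = 0 := by simp [wPn, hA]
  have h2 : wPn b = 0 := by simp [wPn, hB]
  simp only [cLJp, cPn, List.map_append, List.sum_append, List.map_cons,
    List.sum_cons] at hc ⊢
  omega

lemma cnt2_scalar (w₁ w₂ : List Ltr) (a b : Ltr) (hA : isP a.2 = false) (hB : isP b.2 = false)
    (hc : cLJn (w₁ ++ a :: b :: w₂) < cPp (w₁ ++ a :: b :: w₂)) :
    cLJn (w₁ ++ w₂) < cPp (w₁ ++ w₂) := by
  have h1 : wPp a = 0 := by simp [wPp, hA]
  have h2 : wPp b = 0 := by simp [wPp, hB]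
  simp only [cLJn, cPp, List.map_append, List.sum_append, List.map_cons,
    List.sum_cons] at hc ⊢
  omega

lemma decompR (w : List Ltr) :
    (∀ l ∈ w, l.1 ≤ 0) ∨
      ∃ w₁ a w₂, w = w₁ ++ a :: w₂ ∧ 0 < a.1 ∧ ∀ l ∈ w₂, l.1 ≤ 0 := by
  induction w with
  | nil => left; simp
  | cons x w' ih =>
    rcases ih with hall | ⟨w₁, a, w₂, rfl, ha, hw₂⟩
    · by_cases hx : 0 < x.1
      · right; exact ⟨[], x, w', rfl, hx, hall⟩
      · left; intro l hl
        rcases List.mem_cons.mp hl with rfl | hl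
        · omega
        · exact hall l hl
    · right; exact ⟨x :: w₁, a, w₂, rfl, ha, hw₂⟩

lemma decompL (w : List Ltr) :
    (∀ l ∈ w, 0 ≤ l.1) ∨
      ∃ w₁ b w₂, w = w₁ ++ b :: w₂ ∧ b.1 < 0 ∧ ∀ l ∈ w₁, 0 ≤ l.1 := by
  induction w with
  | nil => left; simp
  | cons x w' ih =>
    by_cases hx : x.1 < 0
    · right; exact ⟨[], x, w', rfl, hx, by simp⟩
    · rcases ih with hall | ⟨w₁, b, w₂, rfl, hb, hw₁⟩
      · left; intro l hl
        rcases List.mem_cons.mp hl with rfl | hl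
        · omega
        · exact hall l hl
      · right
        refine ⟨x :: w₁, b, w₂, rfl, hb, ?_⟩
        intro l hl
        rcases List.mem_cons.mp hl with rfl | hl
        · omega
        · exact hw₁ l hl

lemma Ctx.allNonpos : ∀ (w : List Ltr), (∀ l ∈ w, l.1 ≤ 0) → 0 < cPn w →
    c.v (c.W w) = 0 := by
  intro w
  induction w with
  | nil => intro _ hpn; simp [cPn] at hpn
  | cons a w' ih =>
    intro hall hpn
    have ha := hall a (List.mem_cons_self)
    rw [c.W_cons]
    rcases lt_or_eq_of_le ha with ha' | ha'
    · exact c.vL _ a ha'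
    · obtain ⟨m, k⟩ := a
      simp only at ha'
      subst ha'
      rw [c.vz_left]
      have : c.v (c.W w') = 0 := by
        apply ih (fun l hl => hall l (List.mem_cons_of_mem _ hl))
        have : wPn (0, k) = 0 := by simp [wPn]
        simp only [cPn, List.map_cons, List.sum_cons] at hpn ⊢
        omega
      rw [this, mul_zero]

lemma Ctx.allNonneg : ∀ (w : List Ltr), (∀ l ∈ w, 0 ≤ l.1) → 0 < cPp w →
    c.v (c.W w) = 0 := by
  intro w
  induction w using List.reverseRecOn with
  | nil => intro _ hpn; simp [cPp] at hpn
  | append_singleton w' a ih =>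
    intro hall hpn
    have ha := hall a (by simp)
    rw [c.W_append]
    rcases lt_or_eq_of_le ha with ha' | ha'
    · have : c.W [a] = c.gen a := by simp [Ctx.W]
      rw [this]
      exact c.vR _ a ha'
    · obtain ⟨m, k⟩ := a
      simp only at ha'
      subst ha'
      have : c.W [((0:ℤ), k)] = c.gen (0, k) := by simp [Ctx.W]
      rw [this, c.vz_right]
      have : c.v (c.W w') = 0 := by
        apply ih (fun l hl => hall l (by simp [hl]))
        have : wPp ((0:ℤ), k) = 0 := by simp [wPp]
        simp only [cPp, List.map_append, List.sum_append, List.map_cons, List.map_nil,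
          List.sum_cons, List.sum_nil] at hpn ⊢
        omega
      rw [this, mul_zero]

lemma Ctx.V1 : ∀ (n : ℕ) (w : List Ltr), w.length ≤ n → cLJp w < cPn w →
    c.v (c.W w) = 0 := by
  intro n
  induction n with
  | zero =>
    intro w hlen hc
    rw [List.length_eq_zero_iff.mp (Nat.le_zero.mp hlen)] at hc
    simp [cLJp, cPn] at hc
  | succ n IH =>
    have push : ∀ (w₂ : List Ltr), (∀ l ∈ w₂, l.1 ≤ 0) → ∀ (w₁ : List Ltr) (a : Ltr),
        0 < a.1 → (w₁ ++ a :: w₂).length ≤ n + 1 →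
        cLJp (w₁ ++ a :: w₂) < cPn (w₁ ++ a :: w₂) → c.v (c.W (w₁ ++ a :: w₂)) = 0 := by
      intro w₂
      induction w₂ with
      | nil =>
        intro _ w₁ a ha _ _
        have : c.W (w₁ ++ [a]) = c.W w₁ * c.gen a := by
          rw [c.W_append]; simp [Ctx.W]
        rw [this]
        exact c.vR _ a ha
      | cons b w₂' ih =>
        intro hall w₁ a ha hlen hc
        have hb : b.1 ≤ 0 := hall b (List.mem_cons_self)
        have hall' : ∀ l ∈ w₂', l.1 ≤ 0 := fun l hl => hall l (List.mem_cons_of_mem _ hl)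
        rw [c.vswap w₁ w₂' a b]
        have hlen' : (w₁ ++ a :: b :: w₂').length = w₁.length + w₂'.length + 2 := by
          simp; omega
        have hswap : c.v (c.W (w₁ ++ b :: a :: w₂')) = 0 := by
          have heq : w₁ ++ b :: a :: w₂' = (w₁ ++ [b]) ++ a :: w₂' := by simp
          rw [heq]
          apply ih hall' (w₁ ++ [b]) a ha
          · rw [← heq]; simp at hlen ⊢; omega
          · rw [← heq]
            show cLJp _ < cPn _
            unfold cLJp cPn
            rw [cnt_swap wLJp w₁ w₂' a b, cnt_swap wPn w₁ w₂' a b]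
            exact hc
        have hbr : ((brL a b).map fun t => t.1 * c.v (c.W (w₁ ++ t.2 :: w₂'))).sum = 0 := by
          apply List.sum_eq_zero
          intro x hx
          rcases List.mem_map.mp hx with ⟨t, ht, rfl⟩
          obtain ⟨hmode, hPt, hnot⟩ := brL_shape a b t ht
          have : c.v (c.W (w₁ ++ t.2 :: w₂')) = 0 := by
            apply IH
            · simp at hlen ⊢; omega
            · exact cnt1_step w₁ w₂' a b t.2 ha hb hPt hnot hc
          rw [this, mul_zero]
        have hs : c.brS a b * c.v (c.W (w₁ ++ w₂')) = 0 := by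
          rcases brS_cases c a b with h0 | ⟨hA, hB⟩
          · rw [h0, zero_mul]
          · have : c.v (c.W (w₁ ++ w₂')) = 0 := by
              apply IH
              · simp at hlen ⊢; omega
              · exact cnt1_scalar w₁ w₂' a b hA hB hc
            rw [this, mul_zero]
        rw [hswap, hbr, hs]
        ring
    intro w hlen hc
    rcases decompR w with hall | ⟨w₁, a, w₂, rfl, ha, hw₂⟩
    · exact c.allNonpos w hall (lt_of_le_of_lt (Nat.zero_le _) hc)
    · exact push w₂ hw₂ w₁ a ha hlen hc

lemma Ctx.V2 : ∀ (n : ℕ) (w : List Ltr), w.length ≤ n → cLJn w < cPp w →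
    c.v (c.W w) = 0 := by
  intro n
  induction n with
  | zero =>
    intro w hlen hc
    rw [List.length_eq_zero_iff.mp (Nat.le_zero.mp hlen)] at hc
    simp [cLJn, cPp] at hc
  | succ n IH =>
    have push : ∀ (w₁ : List Ltr), (∀ l ∈ w₁, 0 ≤ l.1) → ∀ (w₂ : List Ltr) (b : Ltr),
        b.1 < 0 → (w₁ ++ b :: w₂).length ≤ n + 1 →
        cLJn (w₁ ++ b :: w₂) < cPp (w₁ ++ b :: w₂) → c.v (c.W (w₁ ++ b :: w₂)) = 0 := by
      intro w₁
      induction w₁ using List.reverseRecOn with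
      | nil =>
        intro _ w₂ b hb _ _
        rw [List.nil_append, c.W_cons]
        exact c.vL _ b hb
      | append_singleton w₁' a ih =>
        intro hall w₂ b hb hlen hc
        have ha : 0 ≤ a.1 := hall a (by simp)
        have hall' : ∀ l ∈ w₁', 0 ≤ l.1 := fun l hl => hall l (by simp [hl])
        have heq : (w₁' ++ [a]) ++ b :: w₂ = w₁' ++ a :: b :: w₂ := by simp
        rw [heq, c.vswap w₁' w₂ a b]
        have hswap : c.v (c.W (w₁' ++ b :: a :: w₂)) = 0 := by
          apply ih hall' (a :: w₂) b hb
          · rw [heq] at hlen; simp at hlen ⊢; omega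
          · show cLJn _ < cPp _
            unfold cLJn cPp
            rw [cnt_swap wLJn w₁' w₂ a b, cnt_swap wPp w₁' w₂ a b]
            rw [heq] at hc
            exact hc
        have hc' : cLJn (w₁' ++ a :: b :: w₂) < cPp (w₁' ++ a :: b :: w₂) := by
          rw [← heq]; exact hc
        have hlen2 : (w₁' ++ a :: b :: w₂).length ≤ n + 1 := by
          rw [← heq]; exact hlen
        have hbr : ((brL a b).map fun t => t.1 * c.v (c.W (w₁' ++ t.2 :: w₂))).sum = 0 := by
          apply List.sum_eq_zero
          intro x hx
          rcases List.mem_map.mp hx with ⟨t, ht, rfl⟩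
          obtain ⟨hmode, hPt, hnot⟩ := brL_shape a b t ht
          have : c.v (c.W (w₁' ++ t.2 :: w₂)) = 0 := by
            apply IH
            · simp at hlen2 ⊢; omega
            · exact cnt2_step w₁' w₂ a b t.2 ha hb hPt hnot hc'
          rw [this, mul_zero]
        have hs : c.brS a b * c.v (c.W (w₁' ++ w₂)) = 0 := by
          rcases brS_cases c a b with h0 | ⟨hA, hB⟩
          · rw [h0, zero_mul]
          · have : c.v (c.W (w₁' ++ w₂)) = 0 := by
              apply IH
              · simp at hlen2 ⊢; omega
              · exact cnt2_scalar w₁' w₂ a b hA hB hc'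
            rw [this, mul_zero]
        rw [hswap, hbr, hs]
        ring
    intro w hlen hc
    rcases decompL w with hall | ⟨w₁, b, w₂, rfl, hb, hw₁⟩
    · exact c.allNonneg w hall (lt_of_le_of_lt (Nat.zero_le _) hc)
    · exact push w₁ hw₁ w₂ b hb hlen hc

lemma cnt_zero (f : Ltr → ℕ) (w : List Ltr) (hf : ∀ l ∈ w, f l = 0) :
    (w.map f).sum = 0 := by
  induction w with
  | nil => simp
  | cons a w ih =>
    simp only [List.map_cons, List.sum_cons]
    rw [hf a (List.mem_cons_self), ih (fun l hl => hf l (List.mem_cons_of_mem _ hl))]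

lemma cnt_len (f : Ltr → ℕ) (w : List Ltr) (hf : ∀ l ∈ w, f l = 1) :
    (w.map f).sum = w.length := by
  induction w with
  | nil => simp
  | cons a w ih =>
    simp only [List.map_cons, List.sum_cons, List.length_cons]
    rw [hf a (List.mem_cons_self), ih (fun l hl => hf l (List.mem_cons_of_mem _ hl))]
    omega

lemma cLJp_zero_P (w : List Ltr) (h : ∀ l ∈ w, isP l.2 = true) : cLJp w = 0 :=
  cnt_zero _ _ (fun l hl => by simp [wLJp, h l hl])

lemma cLJn_zero_P (w : List Ltr) (h : ∀ l ∈ w, isP l.2 = true) : cLJn w = 0 :=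
  cnt_zero _ _ (fun l hl => by simp [wLJn, h l hl])

lemma cPp_zero_LJ (w : List Ltr) (h : ∀ l ∈ w, isP l.2 = false) : cPp w = 0 :=
  cnt_zero _ _ (fun l hl => by simp [wPp, h l hl])

lemma cPn_zero_LJ (w : List Ltr) (h : ∀ l ∈ w, isP l.2 = false) : cPn w = 0 :=
  cnt_zero _ _ (fun l hl => by simp [wPn, h l hl])

lemma cPn_zero_pos (w : List Ltr) (h : ∀ l ∈ w, 0 < l.1) : cPn w = 0 :=
  cnt_zero _ _ (fun l hl => by simp [wPn]; intro _; have := h l hl; omega)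

lemma cLJn_zero_pos (w : List Ltr) (h : ∀ l ∈ w, 0 < l.1) : cLJn w = 0 :=
  cnt_zero _ _ (fun l hl => by simp [wLJn]; intro _; have := h l hl; omega)

lemma cPp_len (w : List Ltr) (h : ∀ l ∈ w, isP l.2 = true ∧ 0 < l.1) : cPp w = w.length :=
  cnt_len _ _ (fun l hl => by simp [wPp, (h l hl).1, (h l hl).2])

lemma cLJp_len (w : List Ltr) (h : ∀ l ∈ w, isP l.2 = false ∧ 0 < l.1) : cLJp w = w.length :=
  cnt_len _ _ (fun l hl => by simp [wLJp, (h l hl).1, (h l hl).2])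

def splits : List Ltr → List (List Ltr × Ltr × List Ltr)
  | [] => []
  | p :: q => ([], p, q) :: (splits q).map (fun s => (p :: s.1, s.2.1, s.2.2))

lemma splits_append (q : List Ltr) (p : Ltr) :
    splits (q ++ [p]) =
      (splits q).map (fun s => (s.1, s.2.1, s.2.2 ++ [p])) ++ [(q, p, [])] := by
  induction q with
  | nil => simp [splits]
  | cons a q' ih =>
    show splits (a :: (q' ++ [p])) = _
    rw [splits, ih]
    simp [splits, List.map_map, Function.comp]

lemma splits_mem (q : List Ltr) (s : List Ltr × Ltr × List Ltr) (hs : s ∈ splits q) :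
    q = s.1 ++ s.2.1 :: s.2.2 := by
  induction q generalizing s with
  | nil => simp [splits] at hs
  | cons a q' ih =>
    rw [splits] at hs
    rcases List.mem_cons.mp hs with rfl | hs
    · rfl
    · rcases List.mem_map.mp hs with ⟨s', hs', rfl⟩
      simp [ih s' hs']

/-- move a `P`-letter to the front of a list of `P`-letters -/
lemma Ctx.Wmove (q' t : List Ltr) (hq' : ∀ l ∈ q', isP l.2 = true) (i : Fin 2) (m : ℤ) :
    c.W (q' ++ (m, K.kP i) :: t) = c.P i m * c.W (q' ++ t) := by
  induction q' with
  | nil => simp [Ctx.W_cons]; rfl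
  | cons a q'' ih =>
    have ha := hq' a (List.mem_cons_self)
    obtain ⟨ma, ka⟩ := a
    have hcomm : c.gen (ma, ka) * c.P i m = c.P i m * c.gen (ma, ka) := by
      cases ka with
      | kL => simp [isP] at ha
      | kJ => simp [isP] at ha
      | kP j =>
        have h0 := c.hPP ma m j i
        rw [Ring.lie_def, sub_eq_zero] at h0
        exact h0
    rw [List.cons_append, List.cons_append, c.W_cons, c.W_cons,
      ih (fun l hl => hq' l (List.mem_cons_of_mem _ hl)), ← mul_assoc, hcomm, mul_assoc]

/-- the contraction scalar -/
noncomputable def Ctx.S (p ℓ : Ltr) : ℂ :=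
  if p.1 + ℓ.1 = 0 then
    match p.2, ℓ.2 with
    | .kP i, .kL => ((p.1 - ℓ.1 : ℤ) : ℂ) * c.ρ i
    | .kP i, .kJ => -(((eps i 0 : ℤ) : ℂ) * c.ρ 0 + ((eps i 1 : ℤ) : ℂ) * c.ρ 1)
    | _, _ => 0
  else 0

/-- sweep of a negative LJ letter through a block of positive `P` letters -/
lemma Ctx.SW : ∀ (q : List Ltr), (∀ l ∈ q, isP l.2 = true ∧ 0 < l.1) →
    ∀ (ℓ : Ltr), isP ℓ.2 = false → ℓ.1 < 0 → ∀ (t : List Ltr),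
    cLJp t ≤ cPn t → cLJn t < q.length + cPp t →
    c.v (c.W (q ++ ℓ :: t)) =
      ((splits q).map fun s => c.S s.2.1 ℓ * c.v (c.W (s.1 ++ (s.2.2 ++ t)))).sum := by
  intro q
  induction q using List.reverseRecOn with
  | nil =>
    intro _ ℓ hℓP hℓn t _ _
    rw [List.nil_append, c.W_cons, c.vL _ ℓ hℓn]
    simp [splits]
  | append_singleton q' p ihq =>
    intro hq ℓ hℓP hℓn t h1 h2
    have hq' : ∀ l ∈ q', isP l.2 = true ∧ 0 < l.1 := fun l hl => hq l (by simp [hl])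
    have hq'P : ∀ l ∈ q', isP l.2 = true := fun l hl => (hq' l hl).1
    have hq'pos : ∀ l ∈ q', 0 < l.1 := fun l hl => (hq' l hl).2
    obtain ⟨hpP, hppos⟩ := hq p (by simp)
    obtain ⟨m, k⟩ := p
    -- counts of q'
    have hq'LJp : cLJp q' = 0 := cLJp_zero_P q' hq'P
    have hq'LJn : cLJn q' = 0 := cLJn_zero_P q' hq'P
    have hq'Pn : cPn q' = 0 := cPn_zero_pos q' hq'pos
    have hq'Pp : cPp q' = q'.length := cPp_len q' hq'
    have heq : (q' ++ [(m, k)]) ++ ℓ :: t = q' ++ (m, k) :: ℓ :: t := by simp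
    rw [heq, c.vswap q' t (m, k) ℓ]
    -- the swap term via the inductive hypothesis
    have hswap : c.v (c.W (q' ++ ℓ :: (m, k) :: t)) =
        ((splits q').map fun s =>
          c.S s.2.1 ℓ * c.v (c.W (s.1 ++ (s.2.2 ++ (m, k) :: t)))).sum := by
      apply ihq hq' ℓ hℓP hℓn ((m, k) :: t)
      · have hw1 : wLJp (m, k) = 0 := by simp [wLJp, hpP]
        have hw2 : wPn (m, k) = 0 := by simp [wPn]; intro _; omega
        simp only [cLJp, cPn, List.map_cons, List.sum_cons] at h1 ⊢
        omega
      · have hw1 : wLJn (m, k) = 0 := by simp [wLJn, hpP]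
        have hw2 : wPp (m, k) = 1 := by simp [wPp, hpP, hppos]
        simp only [cLJn, cPp, List.map_cons, List.sum_cons, List.length_append,
          List.length_cons, List.length_nil] at h2 ⊢
        omega
    -- the contraction term
    have hbr : ((brL (m, k) ℓ).map fun t' => t'.1 * c.v (c.W (q' ++ t'.2 :: t))).sum
        = c.S (m, k) ℓ * c.v (c.W (q' ++ t)) := by
      -- helper: values of the shifted P letter
      have hPval : ∀ (j : Fin 2),
          c.v (c.W (q' ++ (m + ℓ.1, K.kP j) :: t)) =
            (if m + ℓ.1 = 0 then c.ρ j * c.v (c.W (q' ++ t)) else 0) := by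
        intro j
        rcases lt_trichotomy (m + ℓ.1) 0 with hml | hml | hml
        · rw [if_neg (by omega)]
          apply c.V1 (q' ++ (m + ℓ.1, K.kP j) :: t).length _ le_rfl
          have hx1 : wLJp (m + ℓ.1, K.kP j) = 0 := by simp [wLJp, isP]
          have hx2 : wPn (m + ℓ.1, K.kP j) = 1 := by simp [wPn, isP]; omega
          simp only [cLJp, cPn, List.map_append, List.sum_append, List.map_cons,
            List.sum_cons]
          simp only [cLJp, cPn] at hq'LJp hq'Pn h1
          omega
        · rw [if_pos hml, hml]
          rw [c.Wmove q' t hq'P j 0]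
          exact c.vz_left _ (K.kP j)
        · rw [if_neg (by omega)]
          apply c.V2 (q' ++ (m + ℓ.1, K.kP j) :: t).length _ le_rfl
          have hx1 : wLJn (m + ℓ.1, K.kP j) = 0 := by simp [wLJn, isP]
          have hx2 : wPp (m + ℓ.1, K.kP j) = 1 := by simp [wPp, isP]; omega
          simp only [cLJn, cPp, List.map_append, List.sum_append, List.map_cons,
            List.sum_cons]
          simp only [cLJn, cPp] at hq'LJn hq'Pp h2
          simp only [List.length_append, List.length_cons, List.length_nil] at h2
          omega
      cases k with
      | kP i =>
        obtain ⟨nn, k'⟩ := ℓ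
        cases k' with
        | kL =>
          simp only [brL, List.map_cons, List.map_nil, List.sum_cons, List.sum_nil,
            add_zero]
          rw [hPval i]
          simp only [Ctx.S]
          split_ifs with hc0
          · ring
          · ring
        | kJ =>
          simp only [brL, List.map_cons, List.map_nil, List.sum_cons, List.sum_nil,
            add_zero]
          rw [hPval 0, hPval 1]
          simp only [Ctx.S]
          split_ifs with hc0
          · ring
          · ring
        | kP j => simp [isP] at hℓP
      | kL => simp [isP] at hpP
      | kJ => simp [isP] at hpP
    -- the scalar term vanishes
    have hsc : c.brS (m, k) ℓ = 0 := by
      cases k with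
      | kP i =>
        obtain ⟨nn, k'⟩ := ℓ
        cases k' <;> rfl
      | kL => simp [isP] at hpP
      | kJ => simp [isP] at hpP
    rw [hswap, hbr, hsc, zero_mul, add_zero]
    -- reassemble the right-hand side
    rw [splits_append]
    simp only [List.map_append, List.sum_append, List.map_map, List.map_cons,
      List.map_nil, List.sum_cons, List.sum_nil, add_zero, Function.comp]
    simp only [Function.comp_def, List.nil_append, ← List.append_cons]

/-- sweep of a negative LJ letter through the block of positive LJ letters -/
lemma Ctx.SX : ∀ (x : List Ltr), (∀ l ∈ x, isP l.2 = false ∧ 0 < l.1) →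
    ∀ (q : List Ltr), (∀ l ∈ q, isP l.2 = true ∧ 0 < l.1) →
    ∀ (ℓ : Ltr), isP ℓ.2 = false → ℓ.1 < 0 →
    ∀ (t : List Ltr), x.length + cLJp t ≤ cPn t → cLJn t < q.length + cPp t →
    c.v (c.W (q ++ x ++ ℓ :: t)) = c.v (c.W (q ++ ℓ :: (x ++ t))) := by
  intro x
  induction x using List.reverseRecOn with
  | nil => intro _ q _ ℓ _ _ t _ _; simp
  | append_singleton x' ξ ihx =>
    intro hx q hq ℓ hℓP hℓn t h1 h2
    have hx' : ∀ l ∈ x', isP l.2 = false ∧ 0 < l.1 := fun l hl => hx l (by simp [hl])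
    obtain ⟨hξP, hξpos⟩ := hx ξ (by simp)
    have hqP : ∀ l ∈ q, isP l.2 = true := fun l hl => (hq l hl).1
    have hqpos : ∀ l ∈ q, 0 < l.1 := fun l hl => (hq l hl).2
    have hqLJp : cLJp q = 0 := cLJp_zero_P q hqP
    have hqLJn : cLJn q = 0 := cLJn_zero_P q hqP
    have hqPn : cPn q = 0 := cPn_zero_pos q hqpos
    have hqPp : cPp q = q.length := cPp_len q hq
    have hxLJp : cLJp x' = x'.length := cLJp_len x' hx'
    have hxLJn : cLJn x' = 0 := cLJn_zero_pos x' (fun l hl => (hx' l hl).2)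
    have hxPp : cPp x' = 0 := cPp_zero_LJ x' (fun l hl => (hx' l hl).1)
    have hxPn : cPn x' = 0 := cPn_zero_LJ x' (fun l hl => (hx' l hl).1)
    have heq : q ++ (x' ++ [ξ]) ++ ℓ :: t = (q ++ x') ++ ξ :: ℓ :: t := by simp
    rw [heq, c.vswap (q ++ x') t ξ ℓ]
    -- contraction terms vanish
    have hbr : ((brL ξ ℓ).map fun t' => t'.1 * c.v (c.W ((q ++ x') ++ t'.2 :: t))).sum
        = 0 := by
      apply List.sum_eq_zero
      intro z hz
      rcases List.mem_map.mp hz with ⟨t', ht', rfl⟩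
      obtain ⟨hmode, hPt, _⟩ := brL_shape ξ ℓ t' ht'
      rw [hξP, hℓP] at hPt
      simp only [Bool.or_self] at hPt
      have hval : c.v (c.W ((q ++ x') ++ t'.2 :: t)) = 0 := by
        rcases lt_or_ge t'.2.1 0 with hs | hs
        · apply c.V1 ((q ++ x') ++ t'.2 :: t).length _ le_rfl
          have hz1 : wLJp t'.2 = 0 := by simp [wLJp]; intro _; omega
          have hz2 : wPn t'.2 = 0 := by simp [wPn, hPt]
          simp only [cLJp, cPn, List.map_append, List.sum_append, List.map_cons,
            List.sum_cons]
          simp only [cLJp, cPn] at hqLJp hqPn hxLJp hxPn h1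
          simp only [List.length_append, List.length_cons, List.length_nil] at h1
          omega
        · apply c.V2 ((q ++ x') ++ t'.2 :: t).length _ le_rfl
          have hz1 : wLJn t'.2 = 0 := by simp [wLJn]; intro _; omega
          have hz2 : wPp t'.2 = 0 := by simp [wPp, hPt]
          simp only [cLJn, cPp, List.map_append, List.sum_append, List.map_cons,
            List.sum_cons]
          simp only [cLJn, cPp] at hqLJn hqPp hxLJn hxPp h2
          omega
      rw [hval, mul_zero]
    -- scalar term vanishes
    have hsc : c.brS ξ ℓ * c.v (c.W ((q ++ x') ++ t)) = 0 := by
      have hval : c.v (c.W ((q ++ x') ++ t)) = 0 := by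
        apply c.V1 ((q ++ x') ++ t).length _ le_rfl
        simp only [cLJp, cPn, List.map_append, List.sum_append]
        simp only [cLJp, cPn] at hqLJp hqPn hxLJp hxPn h1
        simp only [List.length_append, List.length_cons, List.length_nil] at h1
        omega
      rw [hval, mul_zero]
    rw [hbr, hsc, add_zero, add_zero]
    -- swap term via the inductive hypothesis
    have hlist : (q ++ x') ++ ℓ :: ξ :: t = q ++ x' ++ ℓ :: (ξ :: t) := by simp
    rw [hlist]
    rw [ihx hx' q hq ℓ hℓP hℓn (ξ :: t) ?_ ?_]
    · congr 2
      simp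
    · have hw1 : wLJp ξ = 1 := by simp [wLJp, hξP, hξpos]
      have hw2 : wPn ξ = 0 := by simp [wPn, hξP]
      simp only [cLJp, cPn, List.map_cons, List.sum_cons]
      simp only [cLJp, cPn] at h1
      simp only [List.length_append, List.length_cons, List.length_nil] at h1 ⊢
      omega
    · have hw1 : wLJn ξ = 0 := by simp [wLJn, hξP]; omega
      have hw2 : wPp ξ = 0 := by simp [wPp, hξP]
      simp only [cLJn, cPp, List.map_cons, List.sum_cons]
      simp only [cLJn, cPp] at h2
      omega

lemma cLJp_zero_neg (w : List Ltr) (h : ∀ l ∈ w, l.1 < 0) : cLJp w = 0 :=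
  cnt_zero _ _ (fun l hl => by simp [wLJp]; intro _; have := h l hl; omega)

lemma cPp_zero_neg (w : List Ltr) (h : ∀ l ∈ w, l.1 < 0) : cPp w = 0 :=
  cnt_zero _ _ (fun l hl => by simp [wPp]; intro _; have := h l hl; omega)

lemma cPn_len (w : List Ltr) (h : ∀ l ∈ w, isP l.2 = true ∧ l.1 < 0) : cPn w = w.length :=
  cnt_len _ _ (fun l hl => by simp [wPn, (h l hl).1, (h l hl).2])

lemma cLJn_len (w : List Ltr) (h : ∀ l ∈ w, isP l.2 = false ∧ l.1 < 0) : cLJn w = w.length :=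
  cnt_len _ _ (fun l hl => by simp [wLJn, (h l hl).1, (h l hl).2])

/-- The main factorization lemma. -/
lemma Ctx.Cmain : ∀ (n : ℕ) (q : List Ltr), q.length ≤ n →
    (∀ l ∈ q, isP l.2 = true ∧ 0 < l.1) →
    ∀ (x : List Ltr), (∀ l ∈ x, isP l.2 = false ∧ 0 < l.1) →
    ∀ (y : List Ltr), (∀ l ∈ y, isP l.2 = false ∧ l.1 < 0) →
    ∀ (r : List Ltr), (∀ l ∈ r, isP l.2 = true ∧ l.1 < 0) →
    q.length = y.length → x.length = r.length →
    c.v (c.W (q ++ x ++ y ++ r)) = c.v (c.W (x ++ r)) * c.v (c.W (q ++ y)) := by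
  intro n
  induction n with
  | zero =>
    intro q hlen hq x hx y hy r hr hqy hxr
    have hq0 : q = [] := List.length_eq_zero_iff.mp (Nat.le_zero.mp hlen)
    subst hq0
    have hy0 : y = [] := List.length_eq_zero_iff.mp hqy.symm
    subst hy0
    simp only [List.nil_append, List.append_nil]
    rw [show c.v (c.W []) = 1 from c.hv1, mul_one]
  | succ n IH =>
    intro q hlen hq x hx y hy r hr hqy hxr
    cases y with
    | nil =>
      have hq0 : q = [] := List.length_eq_zero_iff.mp (by simpa using hqy)
      subst hq0
      simp only [List.nil_append, List.append_nil]
      rw [show c.v (c.W []) = 1 from c.hv1, mul_one]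
    | cons ℓ y' =>
      obtain ⟨hℓP, hℓn⟩ := hy ℓ (List.mem_cons_self)
      have hy' : ∀ l ∈ y', isP l.2 = false ∧ l.1 < 0 :=
        fun l hl => hy l (List.mem_cons_of_mem _ hl)
      have hrP : ∀ l ∈ r, isP l.2 = true := fun l hl => (hr l hl).1
      have hrneg : ∀ l ∈ r, l.1 < 0 := fun l hl => (hr l hl).2
      have hy'LJp : cLJp y' = 0 := cLJp_zero_neg y' (fun l hl => (hy' l hl).2)
      have hy'LJn : cLJn y' = y'.length := cLJn_len y' hy'
      have hy'Pp : cPp y' = 0 := cPp_zero_neg y' (fun l hl => (hy' l hl).2)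
      have hy'Pn : cPn y' = 0 := cPn_zero_LJ y' (fun l hl => (hy' l hl).1)
      have hrPn : cPn r = r.length := cPn_len r hr
      have hrLJp : cLJp r = 0 := cLJp_zero_neg r hrneg
      have hrLJn : cLJn r = 0 := cLJn_zero_P r hrP
      have hrPp : cPp r = 0 := cPp_zero_neg r hrneg
      have hxLJp : cLJp x = x.length := cLJp_len x hx
      have hxLJn : cLJn x = 0 := cLJn_zero_pos x (fun l hl => (hx l hl).2)
      have hxPp : cPp x = 0 := cPp_zero_LJ x (fun l hl => (hx l hl).1)
      have hxPn : cPn x = 0 := cPn_zero_LJ x (fun l hl => (hx l hl).1)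
      have hqlen : q.length = y'.length + 1 := by simpa using hqy
      -- counts on appended tails
      have capp : ∀ u w : List Ltr, cLJp (u ++ w) = cLJp u + cLJp w ∧
          cLJn (u ++ w) = cLJn u + cLJn w ∧ cPp (u ++ w) = cPp u + cPp w ∧
          cPn (u ++ w) = cPn u + cPn w := by
        intro u w
        simp [cLJp, cLJn, cPp, cPn, List.map_append, List.sum_append]
      -- Step 1: move ℓ through x
      have hlist1 : q ++ x ++ (ℓ :: y') ++ r = q ++ x ++ ℓ :: (y' ++ r) := by simp
      rw [hlist1]
      rw [c.SX x hx q hq ℓ hℓP hℓn (y' ++ r) ?_ ?_]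
      · -- Step 2: sweep ℓ through q
        have hlist2 : q ++ ℓ :: (x ++ (y' ++ r)) = q ++ ℓ :: (x ++ y' ++ r) := by simp
        rw [hlist2]
        rw [c.SW q hq ℓ hℓP hℓn (x ++ y' ++ r) ?_ ?_]
        · -- Step 4: sweep on the RHS
          rw [c.SW q hq ℓ hℓP hℓn y' ?_ ?_]
          · -- Step 3: apply the inductive hypothesis to each term
            rw [← List.sum_map_mul_left]
            refine congrArg List.sum (List.map_congr_left ?_)
            intro s hs
            have hqs := splits_mem q s hs
            have hmem : ∀ l ∈ s.1 ++ s.2.2, l ∈ q := by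
              intro l hl
              rw [hqs]
              simp only [List.mem_append, List.mem_cons] at hl ⊢
              tauto
            have hlen' : (s.1 ++ s.2.2).length ≤ n := by
              have : q.length = (s.1 ++ s.2.2).length + 1 := by
                rw [hqs]; simp; omega
              omega
            have hylen : (s.1 ++ s.2.2).length = y'.length := by
              have : q.length = (s.1 ++ s.2.2).length + 1 := by
                rw [hqs]; simp; omega
              omega
            have IHapp := IH (s.1 ++ s.2.2) hlen' (fun l hl => hq l (hmem l hl))
              x hx y' hy' r hr hylen hxr
            rw [show s.1 ++ (s.2.2 ++ (x ++ y' ++ r)) = (s.1 ++ s.2.2) ++ x ++ y' ++ r by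
                simp,
              IHapp,
              show s.1 ++ (s.2.2 ++ y') = (s.1 ++ s.2.2) ++ y' by simp]
            ring
          · simp [hy'LJp, hy'Pn]
          · rw [hy'LJn]; omega
        · obtain ⟨e1, e2, e3, e4⟩ := capp (x ++ y') r
          obtain ⟨f1, f2, f3, f4⟩ := capp x y'
          rw [e1, e4, f1, f4, hxLJp, hy'LJp, hxPn, hy'Pn, hrPn]
          omega
        · obtain ⟨e1, e2, e3, e4⟩ := capp (x ++ y') r
          obtain ⟨f1, f2, f3, f4⟩ := capp x y'
          rw [e2, e3, f2, f3, hxLJn, hy'LJn, hrLJn, hxPp, hy'Pp, hrPp]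
          omega
      · obtain ⟨e1, e2, e3, e4⟩ := capp y' r
        rw [e1, e4, hy'LJp, hy'Pn, hrLJp, hrPn]
        omega
      · obtain ⟨e1, e2, e3, e4⟩ := capp y' r
        rw [e2, e3, hy'LJn, hrLJn, hy'Pp, hrPp]
        omega

end Stmt19

open Stmt19

/-- Factorization of the mixed inner products in the Verma module of `𝔤̃`
(Lemma 3 of the paper), formalized inside `A = U(𝔤̃)`-like algebra:
`L, J, P` satisfy the relations of `𝔤̃` (with central charges `α, β`), and
`v : A → ℂ` is the vacuum expectation `x ↦ ⟨0|x|0⟩` of the contravariant form,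
so that positive modes annihilate on the right, negative modes on the left, and
zero modes act by the highest weight `(h, μ, ρ 0, ρ 1)`.
A choice `(LJ)_{-A}` is encoded by a list `lA : List (ℤ × Bool)` of (part, L-or-J)
pairs whose parts form the partition `A` (positive, sorted decreasingly), and
`(P¹P²)_{-A}` by a list in `List (ℤ × Fin 2)`; `ω` reverses products and negates
modes, so the bra vector `⟨(LJ)_{-A}(P¹P²)_{-B}|` corresponds to the product of
the reversed lists with positive modes.
Conclusion: the general factorization, and its explicit level-2 instance
`⟨0|ω(L_{-1}P^1_{-1}) · J_{-1}P^2_{-1}|0⟩ = ⟨0|L_1 P^2_{-1}|0⟩ · ⟨0|P^1_1 J_{-1}|0⟩`. -/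
theorem stmt19 {A : Type*} [Ring A] [Algebra ℂ A]
    (h μ α β : ℂ) (ρ : Fin 2 → ℂ)
    (L J : ℤ → A) (P : Fin 2 → ℤ → A)
    (hLL : ∀ m n : ℤ, ⁅L m, L n⁆ = ((m - n : ℤ) : ℂ) • L (m + n)
      + (if m + n = 0 then (α / 12 * ((m * (m ^ 2 - 1) : ℤ) : ℂ)) • (1 : A) else 0))
    (hJJ : ∀ m n : ℤ, ⁅J m, J n⁆ = if m + n = 0 then (β * (m : ℂ)) • (1 : A) else 0)
    (hLJ : ∀ m n : ℤ, ⁅L m, J n⁆ = ((-n : ℤ) : ℂ) • J (m + n))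
    (hLP : ∀ (m n : ℤ) (i : Fin 2), ⁅L m, P i n⁆ = ((m - n : ℤ) : ℂ) • P i (m + n))
    (hJP : ∀ (m n : ℤ) (i : Fin 2),
      ⁅J m, P i n⁆ = ∑ j : Fin 2, (eps i j : ℂ) • P j (m + n))
    (hPP : ∀ (m n : ℤ) (i j : Fin 2), ⁅P i m, P j n⁆ = 0)
    (v : A →ₗ[ℂ] ℂ) (hv1 : v 1 = 1)
    -- positive modes annihilate `|0⟩`:
    (hR : ∀ (x : A) (n : ℤ), 0 < n →
      v (x * L n) = 0 ∧ v (x * J n) = 0 ∧ ∀ i, v (x * P i n) = 0)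
    -- negative modes annihilate `⟨0|`:
    (hLft : ∀ (x : A) (n : ℤ), 0 < n →
      v (L (-n) * x) = 0 ∧ v (J (-n) * x) = 0 ∧ ∀ i, v (P i (-n) * x) = 0)
    -- zero modes act by the highest weight on both sides:
    (hz : ∀ x : A,
      v (x * L 0) = h * v x ∧ v (L 0 * x) = h * v x ∧
      v (x * J 0) = μ * v x ∧ v (J 0 * x) = μ * v x ∧
      ∀ i, v (x * P i 0) = ρ i * v x ∧ v (P i 0 * x) = ρ i * v x) :
    -- general factorization
    (∀ (lA1 : List (ℤ × Bool)) (lB1 : List (ℤ × Fin 2))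
       (lB2 : List (ℤ × Bool)) (lA2 : List (ℤ × Fin 2)),
      (∀ q ∈ lA1, 0 < q.1) → (∀ q ∈ lB1, 0 < q.1) →
      (∀ q ∈ lB2, 0 < q.1) → (∀ q ∈ lA2, 0 < q.1) →
      (lA1.map Prod.fst).Pairwise (· ≥ ·) → (lB1.map Prod.fst).Pairwise (· ≥ ·) →
      (lB2.map Prod.fst).Pairwise (· ≥ ·) → (lA2.map Prod.fst).Pairwise (· ≥ ·) →
      (lA1.map Prod.fst).Perm (lA2.map Prod.fst) →
      (lB1.map Prod.fst).Perm (lB2.map Prod.fst) →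
      -- bra `⟨(LJ)_{-A}(P¹P²)_{-B}|` ket `|(LJ)_{-B}(P¹P²)_{-A}⟩`
      v ((((lB1.map fun q => P q.2 q.1).reverse).prod)
          * (((lA1.map fun q => if q.2 then L q.1 else J q.1).reverse).prod)
          * ((lB2.map fun q => if q.2 then L (-q.1) else J (-q.1)).prod)
          * ((lA2.map fun q => P q.2 (-q.1)).prod))
        = v ((((lA1.map fun q => if q.2 then L q.1 else J q.1).reverse).prod)
              * ((lA2.map fun q => P q.2 (-q.1)).prod))
          * v ((((lB1.map fun q => P q.2 q.1).reverse).prod)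
              * ((lB2.map fun q => if q.2 then L (-q.1) else J (-q.1)).prod))) ∧
    -- level-2 instance with A = (1), B = (1)
    v (P 0 1 * L 1 * J (-1) * P 1 (-1))
      = v (L 1 * P 1 (-1)) * v (P 0 1 * J (-1)) := by
  set c : Ctx A :=
    ⟨h, μ, α, β, ρ, L, J, P, hLL, hJJ, hLJ, hLP, hJP, hPP, v, hv1, hR, hLft, hz⟩ with hc
  have main : ∀ (lA1 : List (ℤ × Bool)) (lB1 : List (ℤ × Fin 2))
      (lB2 : List (ℤ × Bool)) (lA2 : List (ℤ × Fin 2)),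
      (∀ q ∈ lA1, 0 < q.1) → (∀ q ∈ lB1, 0 < q.1) →
      (∀ q ∈ lB2, 0 < q.1) → (∀ q ∈ lA2, 0 < q.1) →
      (lA1.map Prod.fst).Perm (lA2.map Prod.fst) →
      (lB1.map Prod.fst).Perm (lB2.map Prod.fst) →
      v ((((lB1.map fun q => P q.2 q.1).reverse).prod)
          * (((lA1.map fun q => if q.2 then L q.1 else J q.1).reverse).prod)
          * ((lB2.map fun q => if q.2 then L (-q.1) else J (-q.1)).prod)
          * ((lA2.map fun q => P q.2 (-q.1)).prod))
        = v ((((lA1.map fun q => if q.2 then L q.1 else J q.1).reverse).prod)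
              * ((lA2.map fun q => P q.2 (-q.1)).prod))
          * v ((((lB1.map fun q => P q.2 q.1).reverse).prod)
              * ((lB2.map fun q => if q.2 then L (-q.1) else J (-q.1)).prod)) := by
    intro lA1 lB1 lB2 lA2 hA1 hB1 hB2 hA2 hpa hpb
    set qq : List Ltr := (lB1.map fun p => ((p.1, K.kP p.2) : Ltr)).reverse with hqq
    set xx : List Ltr :=
      (lA1.map fun p => ((p.1, if p.2 then K.kL else K.kJ) : Ltr)).reverse with hxx
    set yy : List Ltr := lB2.map fun p => ((-p.1, if p.2 then K.kL else K.kJ) : Ltr)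
      with hyy
    set rr : List Ltr := lA2.map fun p => ((-p.1, K.kP p.2) : Ltr) with hrr
    have hWq : c.W qq = ((lB1.map fun q => P q.2 q.1).reverse).prod := by
      rw [Ctx.W, hqq, List.map_reverse, List.map_map]
      rfl
    have hWx : c.W xx = ((lA1.map fun q => if q.2 then L q.1 else J q.1).reverse).prod := by
      rw [Ctx.W, hxx, List.map_reverse, List.map_map]
      congr 2
      apply List.map_congr_left
      intro p _
      cases hp : p.2 <;> simp [hp, Ctx.gen, Function.comp] <;> rfl
    have hWy : c.W yy = (lB2.map fun q => if q.2 then L (-q.1) else J (-q.1)).prod := by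
      rw [Ctx.W, hyy, List.map_map]
      congr 1
      apply List.map_congr_left
      intro p _
      cases hp : p.2 <;> simp [hp, Ctx.gen, Function.comp] <;> rfl
    have hWr : c.W rr = (lA2.map fun q => P q.2 (-q.1)).prod := by
      rw [Ctx.W, hrr, List.map_map]
      rfl
    have hq : ∀ l ∈ qq, isP l.2 = true ∧ 0 < l.1 := by
      intro l hl
      rw [hqq, List.mem_reverse] at hl
      rcases List.mem_map.mp hl with ⟨p, hp, rfl⟩
      exact ⟨rfl, hB1 p hp⟩
    have hxh : ∀ l ∈ xx, isP l.2 = false ∧ 0 < l.1 := by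
      intro l hl
      rw [hxx, List.mem_reverse] at hl
      rcases List.mem_map.mp hl with ⟨p, hp, rfl⟩
      refine ⟨?_, hA1 p hp⟩
      cases p.2 <;> rfl
    have hyh : ∀ l ∈ yy, isP l.2 = false ∧ l.1 < 0 := by
      intro l hl
      rw [hyy] at hl
      rcases List.mem_map.mp hl with ⟨p, hp, rfl⟩
      have := hB2 p hp
      refine ⟨?_, by simp; omega⟩
      cases p.2 <;> rfl
    have hrh : ∀ l ∈ rr, isP l.2 = true ∧ l.1 < 0 := by
      intro l hl
      rw [hrr] at hl
      rcases List.mem_map.mp hl with ⟨p, hp, rfl⟩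
      have := hA2 p hp
      exact ⟨rfl, by simp; omega⟩
    have hqy : qq.length = yy.length := by
      have := hpb.length_eq
      simp only [List.length_map] at this
      simp [hqq, hyy, this]
    have hxr : xx.length = rr.length := by
      have := hpa.length_eq
      simp only [List.length_map] at this
      simp [hxx, hrr, this]
    have key := c.Cmain (qq.length) qq le_rfl hq xx hxh yy hyh rr hrh hqy hxr
    have e1 : c.W (qq ++ xx ++ yy ++ rr) = c.W qq * c.W xx * c.W yy * c.W rr := by
      simp [Ctx.W_append, mul_assoc]
    have e2 : c.W (xx ++ rr) = c.W xx * c.W rr := c.W_append _ _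
    have e3 : c.W (qq ++ yy) = c.W qq * c.W yy := c.W_append _ _
    rw [e1, e2, e3] at key
    rw [hWq, hWx, hWy, hWr] at key
    exact key
  refine ⟨fun lA1 lB1 lB2 lA2 h1 h2 h3 h4 _ _ _ _ hpa hpb =>
    main lA1 lB1 lB2 lA2 h1 h2 h3 h4 hpa hpb, ?_⟩
  have inst := main [((1 : ℤ), true)] [((1 : ℤ), (0 : Fin 2))]
    [((1 : ℤ), false)] [((1 : ℤ), (1 : Fin 2))]
    (by simp) (by simp) (by simp) (by simp) (by simp) (by simp)
  simpa using inst
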